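/- Let A be a filtered commutative ring with decreasing filtration A = F^0 ⊇ F^1 ⊇ ... ⊇ F^{d+1} = 0 by ideals, and operators T_r : A → A (r = q, q+1, ..., d) preserving each F^j, such that for every j and x ∈ F^j one has T_j(x) − c_j x ∈ F^{j+1} for nonzero integers c_j. Then for x ∈ F^q_alt of an a priori coarser filtration satisfying the same almost-eigenvalue property, one obtains (c_d · c_{d-1} ⋯ c_q) x ∈ F^q whenever x can be iteratively corrected; concretely, in the setting of the paper: for a regular noetherian separated scheme S of finite dimension d and q ≥ 1, (d−1)!·(d−2)!⋯(q−1)! · Fil^q_top K₀(S) ⊆ Fil^q_γ K₀(S). -/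

import Mathlib

/-- concrete form, as in the paper. Let `K₀(S)` (abstractly: a
commutative ring `A`) carry a decreasing coniveau filtration `Ftop` with
`Ftop^{d+1} = 0` (`S` of finite dimension `d`) and a decreasing γ-filtration `Fgam`,
with γ-operations satisfying, for `q ≥ 1` and `x ∈ Ftop^q`:
(a) `γ^q(x) − (−1)^{q−1}(q−1)!·x ∈ Ftop^{q+1}` and (b) `γ^q(x) ∈ Fgam^q`.
Then for every `q ≥ 1`,
`(d−1)!·(d−2)!⋯(q−1)! · Ftop^q ⊆ Fgam^q`. -/
theorem factorial_multiple_of_coniveau_in_gamma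
    {A : Type*} [CommRing A] (d : ℕ)
    (Ftop Fgam : ℕ → AddSubgroup A) (gam : ℕ → A → A)
    (htop_anti : ∀ r, Ftop (r + 1) ≤ Ftop r)
    (hgam_anti : ∀ r, Fgam (r + 1) ≤ Fgam r)
    (htop_vanish : Ftop (d + 1) = ⊥)
    (ha : ∀ r, 1 ≤ r → ∀ x ∈ Ftop r,
      gam r x - ((-1 : ℤ) ^ (r - 1) * (r - 1).factorial) • x ∈ Ftop (r + 1))
    (hb : ∀ r, 1 ≤ r → ∀ x ∈ Ftop r, gam r x ∈ Fgam r)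
    (q : ℕ) (hq : 1 ≤ q) (x : A) (hx : x ∈ Ftop q) :
    (∏ j ∈ Finset.Icc (q - 1) (d - 1), Nat.factorial j) • x ∈ Fgam q := by
  -- antitone in general
  have htop_le : ∀ a b : ℕ, a ≤ b → Ftop b ≤ Ftop a := by
    intro a b hab
    induction hab with
    | refl => exact le_rfl
    | step h ih => exact le_trans (htop_anti _) ih
  -- main claim by downward induction
  have main : ∀ k : ℕ, ∀ r : ℕ, 1 ≤ r → d + 1 ≤ r + k → ∀ y ∈ Ftop r,
      (∏ j ∈ Finset.Icc (r - 1) (d - 1), Nat.factorial j) • y ∈ Fgam r := by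
    intro k
    induction k with
    | zero =>
      intro r hr hdr y hy
      have : y ∈ (⊥ : AddSubgroup A) := by
        rw [← htop_vanish]
        exact htop_le _ _ (by omega) hy
      rw [AddSubgroup.mem_bot] at this
      rw [this, smul_zero]
      exact (Fgam r).zero_mem
    | succ k ih =>
      intro r hr hdr y hy
      by_cases hrd : d + 1 ≤ r
      · have : y ∈ (⊥ : AddSubgroup A) := by
          rw [← htop_vanish]
          exact htop_le _ _ hrd hy
        rw [AddSubgroup.mem_bot] at this
        rw [this, smul_zero]
        exact (Fgam r).zero_mem
      · push_neg at hrd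
        -- r ≤ d
        set z := gam r y - ((-1 : ℤ) ^ (r - 1) * (r - 1).factorial) • y with hz
        have hzmem : z ∈ Ftop (r + 1) := ha r hr y hy
        set P := ∏ j ∈ Finset.Icc r (d - 1), Nat.factorial j with hP
        have hIH : P • z ∈ Fgam (r + 1) := by
          have := ih (r + 1) (by omega) (by omega) z hzmem
          simpa [hP, Nat.add_sub_cancel] using this
        have hgamz : P • gam r y ∈ Fgam r := (Fgam r).nsmul_mem (hb r hr y hy) P
        have hc : ((-1 : ℤ) ^ (r - 1) * (r - 1).factorial) • (P • y) ∈ Fgam r := by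
          have : ((-1 : ℤ) ^ (r - 1) * (r - 1).factorial) • (P • y)
              = P • gam r y - P • z := by
            rw [hz]
            rw [smul_sub, smul_comm]
            abel
          rw [this]
          exact (Fgam r).sub_mem hgamz (hgam_anti r hIH)
        -- remove the sign
        have hsign : (((r - 1).factorial : ℤ)) • (P • y) ∈ Fgam r := by
          have h1 : ((-1 : ℤ) ^ (r - 1)) * ((-1 : ℤ) ^ (r - 1)) = 1 := by
            rw [← pow_add]
            exact Even.neg_one_pow ⟨r - 1, rfl⟩
          have := (Fgam r).zsmul_mem hc ((-1 : ℤ) ^ (r - 1))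
          rwa [smul_smul, ← mul_assoc, h1, one_mul] at this
        -- combine the product
        have hsplit : (∏ j ∈ Finset.Icc (r - 1) (d - 1), Nat.factorial j)
            = (r - 1).factorial * P := by
          have hr1 : r - 1 + 1 = r := by omega
          rw [hP, Finset.Icc_eq_cons_Ioc (by omega : r - 1 ≤ d - 1),
            Finset.prod_cons, ← Finset.Icc_add_one_left_eq_Ioc, hr1]
        rw [hsplit, mul_smul]
        have : ((r - 1).factorial : ℤ) • (P • y) = (r - 1).factorial • (P • y) := by
          simp
        rwa [this] at hsign
  have := main (d + 1) q hq (by omega) x hx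
  exact this
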